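/- Let m = (m₁,m₂) ∈ ℕ². The rhodonea nodes can be written as LS^{(m)} = {x(r,θ) ∈ 𝔻 : T_{m₁}(r)² = cos²(m₂θ) ∈ {0,1}} (in polar coordinates x(r,θ) = (r cos θ, r sin θ), r ∈ [0,1]); that is, LS^{(m)} consists exactly of those points of the rhodonea variety 𝓡^{(m)} = {x(r,θ) ∈ 𝔻 : T_{m₁}(r)² = cos²(m₂θ)} at which T_{m₁}(r)² and cos²(m₂θ) attain the extreme values 0 or 1. -/

import Mathlib

noncomputable section

/-- The rhodonea curve `ρ^{(m)}_α`. -/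
def rho (m₁ m₂ : ℕ) (α : ℝ) (t : ℝ) : ℝ × ℝ :=
  (Real.cos (m₂ * t) * Real.cos (m₁ * t - α * Real.pi),
   Real.cos (m₂ * t) * Real.sin (m₁ * t - α * Real.pi))

/-- The sampling parameters `t^{(m)}_l = l π / (2 m₁ m₂)`. -/
def tSample (m₁ m₂ : ℕ) (l : ℕ) : ℝ := l * Real.pi / (2 * m₁ * m₂)

/-- The set `S^{(m)}(t)` of parameters in `[0, 2π)` hitting the same point as `t`. -/
def Sset (m₁ m₂ : ℕ) (α t : ℝ) : Set ℝ :=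
  {s | s ∈ Set.Ico (0 : ℝ) (2 * Real.pi) ∧ rho m₁ m₂ α s = rho m₁ m₂ α t}

/-- The sample point set `LS^{(m)}_α` along the rhodonea curve. -/
def LSa (m₁ m₂ : ℕ) (α : ℝ) : Set (ℝ × ℝ) :=
  {p | ∃ l : ℕ, l < 4 * m₁ * m₂ ∧ p = rho m₁ m₂ α (tSample m₁ m₂ l)}

/-- The nodal index set `I^{(m)}` as a set. -/
def Idx (m₁ m₂ : ℕ) : Set (ℤ × ℤ) :=
  {i | 0 ≤ i.1 ∧ i.1 ≤ (m₁ : ℤ) ∧ -(2 * (m₂ : ℤ)) < i.2 ∧ i.2 ≤ 2 * (m₂ : ℤ) ∧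
       (i.1 = (m₁ : ℤ) → i.2 ≤ 0) ∧ Even (i.1 + i.2)}

/-- The nodal index set `I^{(m)}` as a finset. -/
def IdxF (m₁ m₂ : ℕ) : Finset (ℤ × ℤ) :=
  (Finset.Icc (0 : ℤ) (m₁ : ℤ) ×ˢ Finset.Ioc (-(2 * (m₂ : ℤ))) (2 * (m₂ : ℤ))).filter
    (fun i => (i.1 = (m₁ : ℤ) → i.2 ≤ 0) ∧ Even (i.1 + i.2))

/-- Radial coordinate `r^{(m₁)}_{i₁} = cos(i₁ π / (2 m₁))`. -/
def rI (m₁ : ℕ) (i₁ : ℤ) : ℝ := Real.cos (i₁ * Real.pi / (2 * m₁))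

/-- Angular coordinate `θ^{(m₂)}_{i₂} = i₂ π / (2 m₂)`. -/
def thetaI (m₂ : ℕ) (i₂ : ℤ) : ℝ := i₂ * Real.pi / (2 * m₂)

/-- The rhodonea node `x^{(m)}_i` in Cartesian coordinates. -/
def node (m₁ m₂ : ℕ) (i : ℤ × ℤ) : ℝ × ℝ :=
  (rI m₁ i.1 * Real.cos (thetaI m₂ i.2), rI m₁ i.1 * Real.sin (thetaI m₂ i.2))

/-- The rhodonea node set `LS^{(m)}`. -/
def LS (m₁ m₂ : ℕ) : Set (ℝ × ℝ) := node m₁ m₂ '' Idx m₁ m₂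

/-- Chebyshev polynomial of the first kind, `T_n(r) = cos(n arccos r)`. -/
def chebT (n : ℕ) (r : ℝ) : ℝ := Real.cos (n * Real.arccos r)

/-- The closed unit disk `𝔻 ⊆ ℝ²`. -/
def closedDisk : Set (ℝ × ℝ) := {x | x.1 ^ 2 + x.2 ^ 2 ≤ 1}

/-- The weights `w^{(m)}_i`. -/
def wgt (m₁ m₂ : ℕ) (i : ℤ × ℤ) : ℝ :=
  if i.1 = 0 then 1 / (4 * m₁ * m₂) else 2 / (4 * m₁ * m₂)

/-- The discrete basis functions `χ^{(m)}_γ(i)`. -/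
def chi (m₁ m₂ : ℕ) (γ i : ℤ × ℤ) : ℂ :=
  (Real.cos (γ.1 * i.1 * Real.pi / (2 * m₁)) : ℂ) *
    Complex.exp (Complex.I * (γ.2 * i.2 * Real.pi / (2 * m₂)))

/-- The discrete inner product `⟨f, g⟩_w` on `L(I^{(m)})`. -/
def innerW (m₁ m₂ : ℕ) (f g : ℤ × ℤ → ℂ) : ℂ :=
  ∑ i ∈ IdxF m₁ m₂, (wgt m₁ m₂ i : ℂ) * f i * (starRingEnd ℂ) (g i)

/-- The rectangular spectral index set `Γ^{(m)}_□`. -/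
def GammaSq (m₁ m₂ : ℕ) : Finset (ℤ × ℤ) :=
  (Finset.Icc (0 : ℤ) (2 * (m₁ : ℤ)) ×ˢ Finset.Ioc (-(m₂ : ℤ)) (m₂ : ℤ)).filter
    (fun γ => Even (γ.1 + γ.2))

/-- The full frequency box `K^{(m)}`. -/
def KSet (m₁ m₂ : ℕ) : Finset (ℤ × ℤ) :=
  Finset.Icc (0 : ℤ) (2 * (m₁ : ℤ)) ×ˢ Finset.Ioc (-(2 * (m₂ : ℤ))) (2 * (m₂ : ℤ))

/-- The flip (glide-reflection) operator `γ ↦ γ*` on `K^{(m)}`, with second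
coordinate `(γ₂ + 2m₂) mod 4m₂` taken in `(-2m₂, 2m₂]`. -/
def flipOp (m₁ m₂ : ℕ) (γ : ℤ × ℤ) : ℤ × ℤ :=
  (2 * (m₁ : ℤ) - γ.1, if γ.2 ≤ 0 then γ.2 + 2 * (m₂ : ℤ) else γ.2 - 2 * (m₂ : ℤ))

/-- `Γ` is a spectral index set for `I^{(m)}`: a subset of `K^{(m)}` satisfying the
parity condition whose functions `χ^{(m)}_γ` form an orthogonal basis of `L(I^{(m)})`. -/
def IsSpectral (m₁ m₂ : ℕ) (Γ : Finset (ℤ × ℤ)) : Prop :=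
  Γ ⊆ KSet m₁ m₂ ∧ (∀ γ ∈ Γ, Even (γ.1 + γ.2)) ∧
  (∀ γ ∈ Γ, ∀ γ' ∈ Γ, γ ≠ γ' → innerW m₁ m₂ (chi m₁ m₂ γ) (chi m₁ m₂ γ') = 0) ∧
  LinearIndependent ℂ (fun γ : ↥Γ => fun i : ↥(IdxF m₁ m₂) => chi m₁ m₂ γ.1 i.1) ∧
  Submodule.span ℂ
    (Set.range (fun γ : ↥Γ => fun i : ↥(IdxF m₁ m₂) => chi m₁ m₂ γ.1 i.1)) = ⊤

/-- The real discrete basis functions `χ^{(m)}_{ℛ,γ}(i)` (for `γ ∈ Γ`). -/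
def chiR (m₁ m₂ : ℕ) (Γ : Finset (ℤ × ℤ)) (γ i : ℤ × ℤ) : ℝ :=
  Real.cos (γ.1 * i.1 * Real.pi / (2 * m₁)) *
    (if ((γ.1, -γ.2) ∈ Γ ∧ 0 ≤ γ.2) ∨ ((γ.1, -γ.2) ∉ Γ ∧ γ.1 ≤ (m₁ : ℤ))
     then Real.cos (γ.2 * i.2 * Real.pi / (2 * m₂))
     else Real.sin (γ.2 * i.2 * Real.pi / (2 * m₂)))

/-- The Chebyshev–Fourier basis functions `X_γ(r, θ) = T_{γ₁}(r) e^{i γ₂ θ}`. -/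
def Xfun (γ : ℤ × ℤ) (p : ℝ × ℝ) : ℂ :=
  (Real.cos (γ.1 * Real.arccos p.1) : ℂ) * Complex.exp (Complex.I * (γ.2 * p.2))

/-- The real Chebyshev–Fourier basis functions `X_{ℛ,γ}` (for `γ ∈ Γ`). -/
def XRfun (m₁ : ℕ) (Γ : Finset (ℤ × ℤ)) (γ : ℤ × ℤ) (p : ℝ × ℝ) : ℝ :=
  Real.cos (γ.1 * Real.arccos p.1) *
    (if ((γ.1, -γ.2) ∈ Γ ∧ 0 ≤ γ.2) ∨ ((γ.1, -γ.2) ∉ Γ ∧ γ.1 ≤ (m₁ : ℤ))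
     then Real.cos (γ.2 * p.2) else Real.sin (γ.2 * p.2))

/-- The Lagrange functions `L^{(m)}_i`. -/
def Lag (m₁ m₂ : ℕ) (Γ : Finset (ℤ × ℤ)) (i : ℤ × ℤ) (p : ℝ × ℝ) : ℂ :=
  (wgt m₁ m₂ i : ℂ) *
    ∑ γ ∈ Γ, ((starRingEnd ℂ) (chi m₁ m₂ γ i) /
      innerW m₁ m₂ (chi m₁ m₂ γ) (chi m₁ m₂ γ)) * Xfun γ p

/-- The complex-valued version of `X_{ℛ,γ}`. -/
def XRc (m₁ : ℕ) (Γ : Finset (ℤ × ℤ)) (γ : ℤ × ℤ) (p : ℝ × ℝ) : ℂ :=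
  (XRfun m₁ Γ γ p : ℂ)

/-- The real Lagrange functions `L^{(m)}_{ℛ,i}`. -/
def LagR (m₁ m₂ : ℕ) (Γ : Finset (ℤ × ℤ)) (i : ℤ × ℤ) (p : ℝ × ℝ) : ℂ :=
  (wgt m₁ m₂ i : ℂ) *
    ∑ γ ∈ Γ, ((chiR m₁ m₂ Γ γ i /
        (∑ j ∈ IdxF m₁ m₂, wgt m₁ m₂ j * chiR m₁ m₂ Γ γ j ^ 2) : ℝ) : ℂ) * XRc m₁ Γ γ p

end

lemma cos_sq_int_half (k : ℤ) :
    Real.cos (k * Real.pi / 2) ^ 2 = if Even k then 1 else 0 := by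
  rw [Real.cos_sq]
  have h2 : 2 * ((k : ℝ) * Real.pi / 2) = k * Real.pi := by ring
  rw [h2]
  rcases Int.even_or_odd k with ⟨q, hq⟩ | ⟨q, hq⟩
  · have he : Even k := ⟨q, hq⟩
    subst hq
    have : ((q + q : ℤ) : ℝ) * Real.pi = q * (2 * Real.pi) := by push_cast; ring
    rw [this, Real.cos_int_mul_two_pi, if_pos he]
    norm_num
  · have ho : ¬ Even k := by simp [hq, Int.even_add_one, parity_simps]
    subst hq
    have : ((2 * q + 1 : ℤ) : ℝ) * Real.pi = q * (2 * Real.pi) + Real.pi := by push_cast; ring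
    rw [this, Real.cos_int_mul_two_pi_add_pi, if_neg ho]
    norm_num

lemma cossq_iff (a : ℝ) :
    (Real.cos a ^ 2 = 0 ∨ Real.cos a ^ 2 = 1) ↔ ∃ k : ℤ, a = k * Real.pi / 2 := by
  constructor
  · rintro (h | h)
    · obtain ⟨k, hk⟩ := Real.cos_eq_zero_iff.mp (sq_eq_zero_iff.mp h)
      exact ⟨2 * k + 1, by push_cast [hk]; ring⟩
    · have hs : Real.sin a = 0 := by
        have h1 : Real.sin a ^ 2 = 0 := by
          have := Real.sin_sq_add_cos_sq a; linarith
        exact sq_eq_zero_iff.mp h1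
      obtain ⟨n, hn⟩ := Real.sin_eq_zero_iff.mp hs
      exact ⟨2 * n, by push_cast [← hn]; ring⟩
  · rintro ⟨k, rfl⟩
    rw [cos_sq_int_half]
    split_ifs <;> simp


/-- Theorem 4.1 b): the rhodonea nodes are the points of the rhodonea variety at
which `T_{m₁}(r)²` and `cos²(m₂θ)` attain the extreme values `0` or `1`. -/
theorem rhodonea_nodes_eq_extremal_points (m₁ m₂ : ℕ) (hm₁ : 0 < m₁) (hm₂ : 0 < m₂) :
    LS m₁ m₂ = {x : ℝ × ℝ | ∃ r θ : ℝ, 0 ≤ r ∧ r ≤ 1 ∧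
      x = (r * Real.cos θ, r * Real.sin θ) ∧
      chebT m₁ r ^ 2 = Real.cos (m₂ * θ) ^ 2 ∧
      (chebT m₁ r ^ 2 = 0 ∨ chebT m₁ r ^ 2 = 1)} := by
  have hm₁R : (0:ℝ) < m₁ := by exact_mod_cast hm₁
  have hm₂R : (0:ℝ) < m₂ := by exact_mod_cast hm₂
  have hpi := Real.pi_pos
  ext x
  constructor
  · rintro ⟨⟨i₁, i₂⟩, ⟨h1, h2, h3, h4, h5, h6⟩, rfl⟩
    simp only [Set.mem_setOf_eq]
    have hi₁R : (0:ℝ) ≤ (i₁:ℝ) := by exact_mod_cast h1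
    have hi₁R' : (i₁:ℝ) ≤ (m₁:ℝ) := by exact_mod_cast h2
    have hang0 : (0:ℝ) ≤ (i₁:ℝ) * Real.pi / (2 * m₁) := by positivity
    have hang1 : (i₁:ℝ) * Real.pi / (2 * m₁) ≤ Real.pi / 2 := by
      rw [div_le_div_iff₀ (by positivity) (by norm_num)]
      nlinarith
    refine ⟨rI m₁ i₁, thetaI m₂ i₂, ?_, Real.cos_le_one _, rfl, ?_, ?_⟩
    · exact Real.cos_nonneg_of_mem_Icc ⟨by linarith, hang1⟩
    · have harc : Real.arccos (rI m₁ i₁) = (i₁:ℝ) * Real.pi / (2 * m₁) :=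
        Real.arccos_cos hang0 (by linarith)
      have e1 : (m₁:ℝ) * ((i₁:ℝ) * Real.pi / (2 * m₁)) = (i₁:ℝ) * Real.pi / 2 := by
        field_simp
      have e2 : (m₂:ℝ) * thetaI m₂ i₂ = (i₂:ℝ) * Real.pi / 2 := by
        unfold thetaI; field_simp
      rw [chebT, harc, e1, e2, cos_sq_int_half, cos_sq_int_half]
      have hpar : Even i₁ ↔ Even i₂ := Int.even_add.mp h6
      by_cases he : Even i₁ <;> simp [he, hpar.mp, (not_iff_not.mpr hpar).mp, hpar] <;> tauto
    · have harc : Real.arccos (rI m₁ i₁) = (i₁:ℝ) * Real.pi / (2 * m₁) :=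
        Real.arccos_cos hang0 (by linarith)
      have e1 : (m₁:ℝ) * ((i₁:ℝ) * Real.pi / (2 * m₁)) = (i₁:ℝ) * Real.pi / 2 := by
        field_simp
      rw [chebT, harc, e1, cos_sq_int_half]
      split_ifs <;> simp
  · rintro ⟨r, θ, hr0, hr1, rfl, heq, hext⟩
    obtain ⟨k, hk⟩ : ∃ k : ℤ, (m₁:ℝ) * Real.arccos r = k * Real.pi / 2 :=
      (cossq_iff _).mp hext
    obtain ⟨j, hj⟩ : ∃ j : ℤ, (m₂:ℝ) * θ = j * Real.pi / 2 := by
      refine (cossq_iff _).mp ?_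
      rw [← heq]; exact hext
    have harc : Real.arccos r = (k:ℝ) * Real.pi / (2 * m₁) := by
      rw [eq_div_iff (by positivity : (2 * (m₁:ℝ)) ≠ 0)]
      linarith
    have hθ : θ = (j:ℝ) * Real.pi / (2 * m₂) := by
      rw [eq_div_iff (by positivity : (2 * (m₂:ℝ)) ≠ 0)]
      linarith
    have harcmul : Real.arccos r * (2 * m₁) = (k:ℝ) * Real.pi := by
      rw [harc]; field_simp
    have hk0 : 0 ≤ k := by
      have h0 := Real.arccos_nonneg r
      have : (0:ℝ) ≤ (k:ℝ) := by nlinarith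
      exact_mod_cast this
    have hk1 : k ≤ (m₁:ℤ) := by
      have hle : Real.arccos r ≤ Real.pi / 2 := Real.arccos_le_pi_div_two.mpr hr0
      have : (k:ℝ) ≤ (m₁:ℝ) := by nlinarith
      exact_mod_cast this
    have hr : r = Real.cos ((k:ℝ) * Real.pi / (2 * m₁)) := by
      rw [← harc, Real.cos_arccos (by linarith) hr1]
    -- parity relation
    have heq' : (if Even k then (1:ℝ) else 0) = if Even j then 1 else 0 := by
      rw [← cos_sq_int_half, ← cos_sq_int_half, ← hk, ← hj]
      exact heq
    have hkj : Even k ↔ Even j := by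
      by_cases hek : Even k <;> by_cases hej : Even j <;>
        simp [hek, hej] at heq' ⊢
    by_cases hkm : k = (m₁:ℤ)
    · -- r = 0 case
      have hr0' : r = 0 := by
        rw [hr, hkm]
        have : ((m₁:ℤ):ℝ) * Real.pi / (2 * (m₁:ℝ)) = Real.pi / 2 := by
          push_cast; field_simp
        rw [this, Real.cos_pi_div_two]
      refine ⟨((m₁:ℤ), if Even (m₁:ℤ) then 0 else -1), ?_, ?_⟩
      · refine ⟨by positivity, le_refl _, ?_, ?_, ?_, ?_⟩
        · split_ifs <;> omega
        · split_ifs <;> omega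
        · intro _; split_ifs <;> omega
        · by_cases he : Even (m₁:ℤ)
          · simp [he]
          · simp only [if_neg he]
            rcases Int.not_even_iff_odd.mp he with ⟨q, hq⟩
            exact ⟨q, by omega⟩
      · have hrI : rI m₁ (m₁:ℤ) = 0 := by
          unfold rI
          have : ((m₁:ℤ):ℝ) * Real.pi / (2 * m₁) = Real.pi / 2 := by
            push_cast; field_simp
          rw [this, Real.cos_pi_div_two]
        simp [node, hrI, hr0']
    · have hklt : k < (m₁:ℤ) := lt_of_le_of_ne hk1 hkm
      have h4m : (0:ℤ) < 4 * m₂ := by positivity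
      set e : ℤ := (j + 2 * m₂ - 1) % (4 * m₂) with he_def
      set q : ℤ := (j + 2 * m₂ - 1) / (4 * m₂) with hq_def
      have he0 : 0 ≤ e := Int.emod_nonneg _ (by omega)
      have he1 : e < 4 * m₂ := Int.emod_lt_of_pos _ h4m
      have hde : 4 * (m₂:ℤ) * q + e = j + 2 * m₂ - 1 := Int.mul_ediv_add_emod _ _
      set i₂ : ℤ := e - (2 * m₂ - 1) with hi₂_def
      have hji : j = i₂ + 4 * (m₂:ℤ) * q := by rw [hi₂_def]; linarith
      have hevq : Even (4 * (m₂:ℤ) * q) := ⟨2 * m₂ * q, by ring⟩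
      have hji_par : Even j ↔ Even i₂ := by
        rw [hji, Int.even_add]
        simp [hevq]
      have hθ2 : θ = thetaI m₂ i₂ + (q:ℝ) * (2 * Real.pi) := by
        rw [hθ, hji]
        unfold thetaI
        push_cast
        field_simp
        ring
      refine ⟨(k, i₂), ⟨hk0, hk1, by omega, by omega, fun h => absurd h hkm, ?_⟩, ?_⟩
      · exact Int.even_add.mpr (hkj.trans hji_par)
      · have hrnode : rI m₁ k = r := by
          unfold rI; rw [hr]
        have hcos : Real.cos (thetaI m₂ i₂) = Real.cos θ := by
          rw [hθ2, Real.cos_add_int_mul_two_pi]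
        have hsin : Real.sin (thetaI m₂ i₂) = Real.sin θ := by
          rw [hθ2, Real.sin_add_int_mul_two_pi]
        simp [node, hrnode, hcos, hsin]
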